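/- Let γ be a closed walk on a graph that decomposes into 2m non-backtracking segments (i.e., the walk backtracks at most 2m times), visiting v vertices and e distinct edges. Then there exists a spanning tree T of the graph G(γ) traversed by γ whose degree sequence (d_u) satisfies Σ_{u: d_u > 2} (d_u − 2) ≤ e − (v − 1) + 2m. -/

import Mathlib

open Finset
set_option linter.unusedSectionVars false

namespace STDOB

variable {V : Type*} [Fintype V] [DecidableEq V] (L : ℕ) (γ : ℕ → V)

def S : Finset V := (Finset.range (L+1)).image γ

def E : Finset (Sym2 V) := (Finset.range L).image fun s => s(γ s, γ (s+1))

def ft (u : V) : ℕ :=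
  if h : ∃ t, t ≤ L ∧ γ t = u then Nat.find h else 0

def par (u : V) : V := γ (ft L γ u - 1)

variable {L γ}

lemma mem_S {u : V} : u ∈ S L γ ↔ ∃ t, t ≤ L ∧ γ t = u := by
  simp [S, Finset.mem_image, Nat.lt_succ_iff]

lemma root_mem : γ 0 ∈ S L γ := mem_S.2 ⟨0, by omega, rfl⟩

lemma ft_spec {u : V} (h : u ∈ S L γ) : ft L γ u ≤ L ∧ γ (ft L γ u) = u := by
  rw [mem_S] at h
  rw [ft, dif_pos h]
  exact Nat.find_spec h

lemma ft_le {u : V} {t : ℕ} (ht : t ≤ L) (he : γ t = u) : ft L γ u ≤ t := by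
  rw [ft, dif_pos ⟨t, ht, he⟩]
  exact Nat.find_min' _ ⟨ht, he⟩

lemma ft_le_L {u : V} : ft L γ u ≤ L := by
  rw [ft]
  split
  · next h => exact (Nat.find_spec h).1
  · omega

lemma ft_root : ft L γ (γ 0) = 0 :=
  Nat.le_zero.1 (ft_le (by omega) rfl)

lemma ft_pos {u : V} (h : u ∈ S L γ) (h0 : u ≠ γ 0) : 1 ≤ ft L γ u := by
  rcases Nat.eq_zero_or_pos (ft L γ u) with hz | hp
  · exfalso
    apply h0
    have h2 := (ft_spec h).2
    rw [hz] at h2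
    exact h2.symm
  · exact hp

lemma ft_lt {u : V} (hclosed : γ L = γ 0) (h : u ∈ S L γ) (h0 : u ≠ γ 0) :
    ft L γ u < L := by
  rcases lt_or_eq_of_le (ft_spec h).1 with h1 | h1
  · exact h1
  · exfalso; apply h0
    have := (ft_spec h).2
    rw [h1, hclosed] at this; exact this.symm

lemma ft_inj {u u' : V} (h : u ∈ S L γ) (h' : u' ∈ S L γ)
    (he : ft L γ u = ft L γ u') : u = u' := by
  have h1 := (ft_spec h).2
  have h2 := (ft_spec h').2
  rw [← h1, ← h2, he]

lemma par_mem {u : V} : par L γ u ∈ S L γ :=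
  mem_S.2 ⟨ft L γ u - 1, by have := ft_le_L (L := L) (γ := γ) (u := u); omega, rfl⟩

lemma ft_par_lt {u : V} (h : u ∈ S L γ) (h0 : u ≠ γ 0) :
    ft L γ (par L γ u) < ft L γ u := by
  have h1 := ft_pos h h0
  have h2 : ft L γ (par L γ u) ≤ ft L γ u - 1 :=
    ft_le (by have := ft_le_L (L := L) (γ := γ) (u := u); omega) rfl
  omega

variable (L γ) in
def T : SimpleGraph V where
  Adj x y := (x ∈ S L γ ∧ x ≠ γ 0 ∧ par L γ x = y) ∨ (y ∈ S L γ ∧ y ≠ γ 0 ∧ par L γ y = x)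
  symm := by constructor; intro x y h; tauto
  loopless := by
    constructor
    intro x h
    rcases h with ⟨hx, h0, hp⟩ | ⟨hx, h0, hp⟩ <;>
    · have h1 := ft_par_lt hx h0
      rw [hp] at h1
      omega

lemma T_adj {x y : V} : (T L γ).Adj x y ↔
    (x ∈ S L γ ∧ x ≠ γ 0 ∧ par L γ x = y) ∨ (y ∈ S L γ ∧ y ≠ γ 0 ∧ par L γ y = x) :=
  Iff.rfl



variable (L γ) in
def ch (u : V) : Finset V := (S L γ).filter fun w => w ≠ γ 0 ∧ par L γ w = u

variable (L γ) in
def Te : Finset (Sym2 V) := ((S L γ).filter (· ≠ γ 0)).image fun u => s(par L γ u, u)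

lemma adj_mem {x y : V} (h : (T L γ).Adj x y) : x ∈ S L γ ∧ y ∈ S L γ := by
  rcases h with ⟨h1, _, h3⟩ | ⟨h1, _, h3⟩
  · exact ⟨h1, h3 ▸ par_mem⟩
  · exact ⟨h3 ▸ par_mem, h1⟩

lemma edge_par_mem (hclosed : γ L = γ 0) {u : V} (hu : u ∈ S L γ) (h0 : u ≠ γ 0) :
    s(par L γ u, u) ∈ E L γ := by
  have h1 := ft_pos hu h0
  have h2 := ft_lt hclosed hu h0
  rw [E, Finset.mem_image]
  refine ⟨ft L γ u - 1, Finset.mem_range.2 (by omega), ?_⟩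
  have h3 : ft L γ u - 1 + 1 = ft L γ u := by omega
  rw [h3, (ft_spec hu).2]
  rfl

lemma adj_mem_E (hclosed : γ L = γ 0) {x y : V} (h : (T L γ).Adj x y) :
    s(x, y) ∈ E L γ := by
  rcases h with ⟨h1, h2, h3⟩ | ⟨h1, h2, h3⟩
  · have := edge_par_mem hclosed h1 h2
    rwa [h3, Sym2.eq_swap] at this
  · have := edge_par_mem hclosed h1 h2
    rwa [h3] at this

lemma Te_subset_E (hclosed : γ L = γ 0) : Te L γ ⊆ E L γ := by
  intro e he
  rw [Te, Finset.mem_image] at he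
  obtain ⟨u, hu, rfl⟩ := he
  rw [Finset.mem_filter] at hu
  exact edge_par_mem hclosed hu.1 hu.2

lemma edgeSet_eq : (T L γ).edgeSet = ↑(Te L γ) := by
  ext e
  induction e using Sym2.ind with
  | _ x y =>
    rw [SimpleGraph.mem_edgeSet, Finset.mem_coe]
    constructor
    · rintro (⟨h1, h2, h3⟩ | ⟨h1, h2, h3⟩)
      · rw [Te, Finset.mem_image]
        exact ⟨x, Finset.mem_filter.2 ⟨h1, h2⟩, by rw [h3, Sym2.eq_swap]⟩
      · rw [Te, Finset.mem_image]
        exact ⟨y, Finset.mem_filter.2 ⟨h1, h2⟩, by rw [h3]⟩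
    · intro hmem
      rw [Te, Finset.mem_image] at hmem
      obtain ⟨u, hu, he⟩ := hmem
      rw [Finset.mem_filter] at hu
      rw [Sym2.eq_iff] at he
      rcases he with ⟨e1, e2⟩ | ⟨e1, e2⟩
      · right; subst e2; exact ⟨hu.1, hu.2, e1⟩
      · left; subst e2; exact ⟨hu.1, hu.2, e1⟩

lemma Te_card : (Te L γ).card + 1 = (S L γ).card := by
  have h1 : (Te L γ).card = ((S L γ).filter (· ≠ γ 0)).card := by
    rw [Te]
    apply Finset.card_image_of_injOn
    intro u hu u' hu' h
    rw [Finset.mem_coe, Finset.mem_filter] at hu hu'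
    rw [Sym2.eq_iff] at h
    rcases h with ⟨_, h2⟩ | ⟨h1, h2⟩
    · exact h2
    · exfalso
      have k1 := ft_par_lt hu.1 hu.2
      have k2 := ft_par_lt hu'.1 hu'.2
      rw [h1] at k1
      rw [← h2] at k2
      omega
  rw [h1, Finset.filter_ne', Finset.card_erase_add_one root_mem]

lemma par_not_mem_ch {u : V} (hu : u ∈ S L γ) (h0 : u ≠ γ 0) :
    par L γ u ∉ ch L γ u := by
  intro hmem
  rw [ch, Finset.mem_filter] at hmem
  obtain ⟨h1, h2, h3⟩ := hmem
  have k1 := ft_par_lt hu h0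
  have k2 := ft_par_lt h1 h2
  rw [h3] at k2
  omega

lemma nbr_root : {w | (T L γ).Adj (γ 0) w} = ↑(ch L γ (γ 0)) := by
  ext w
  simp only [Set.mem_setOf_eq, Finset.coe_filter, ch, Set.mem_setOf_eq, Finset.mem_coe,
    Finset.mem_filter]
  constructor
  · rintro (⟨_, h2, _⟩ | ⟨h1, h2, h3⟩)
    · exact absurd rfl h2
    · exact ⟨h1, h2, h3⟩
  · rintro ⟨h1, h2, h3⟩
    exact Or.inr ⟨h1, h2, h3⟩

lemma nbr_nonroot {u : V} (hu : u ∈ S L γ) (h0 : u ≠ γ 0) :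
    {w | (T L γ).Adj u w} = ↑(insert (par L γ u) (ch L γ u)) := by
  ext w
  simp only [Set.mem_setOf_eq, Finset.coe_insert, Set.mem_insert_iff, Finset.mem_coe]
  constructor
  · rintro (⟨_, _, h3⟩ | ⟨h1, h2, h3⟩)
    · exact Or.inl h3.symm
    · exact Or.inr (by rw [ch, Finset.mem_filter]; exact ⟨h1, h2, h3⟩)
  · rintro (rfl | hw)
    · exact Or.inl ⟨hu, h0, rfl⟩
    · rw [ch, Finset.mem_filter] at hw
      exact Or.inr ⟨hw.1, hw.2.1, hw.2.2⟩

lemma deg_eq {u : V} (hu : u ∈ S L γ) :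
    Nat.card {w | (T L γ).Adj u w} = (ch L γ u).card + (if u = γ 0 then 0 else 1) := by
  by_cases h0 : u = γ 0
  · subst h0
    rw [if_pos rfl, nbr_root, Nat.card_coe_set_eq, Set.ncard_coe_finset, add_zero]
  · rw [if_neg h0, nbr_nonroot hu h0, Nat.card_coe_set_eq, Set.ncard_coe_finset,
      Finset.card_insert_of_notMem (par_not_mem_ch hu h0)]



lemma pen {G : SimpleGraph V} : ∀ {x y : V} (p : G.Walk x y), x ≠ y →
    ∃ z, G.Adj z y ∧ s(z, y) ∈ p.edges ∧ z ∈ p.support := by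
  intro x y p
  induction p with
  | nil => intro h; exact absurd rfl h
  | @cons a b y h q ih =>
    intro _
    by_cases hby : b = y
    · subst hby
      exact ⟨a, h, by simp, by simp⟩
    · obtain ⟨z, hz1, hz2, hz3⟩ := ih hby
      exact ⟨z, hz1, by simp [hz2], by simp [hz3]⟩

lemma T_acyclic : (T L γ).IsAcyclic := by
  intro a c hc
  obtain ⟨u, hu, hmax⟩ := Finset.exists_max_image c.support.toFinset (ft L γ)
    ⟨a, by simp [SimpleGraph.Walk.start_mem_support]⟩
  rw [List.mem_toFinset] at hu
  have hc' : (c.rotate u hu).IsCycle := hc.rotate hu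
  have hsupp : ∀ z ∈ (c.rotate u hu).support, ft L γ z ≤ ft L γ u := by
    intro z hz
    apply hmax
    rw [List.mem_toFinset]
    rw [SimpleGraph.Walk.support_eq_cons] at hz
    rcases List.mem_cons.1 hz with rfl | hz
    · exact hu
    · have htail := SimpleGraph.Walk.support_rotate c u hu
      exact List.mem_of_mem_tail (htail.mem_iff.1 hz)
  generalize c.rotate u hu = c' at hc' hsupp
  cases c' with
  | nil => exact hc'.ne_nil rfl
  | @cons _ w _ h q =>
    rw [SimpleGraph.Walk.cons_isCycle_iff] at hc'
    obtain ⟨hq, he⟩ := hc'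
    have hwu : w ≠ u := h.ne'
    have hw_le : ft L γ w ≤ ft L γ u := by
      apply hsupp
      rw [SimpleGraph.Walk.support_cons]
      exact List.mem_cons_of_mem _ q.start_mem_support
    have hdir1 : par L γ u = w := by
      rcases h with ⟨_, _, h3⟩ | ⟨h1, h2, h3⟩
      · exact h3
      · exfalso
        have := ft_par_lt h1 h2
        rw [h3] at this
        omega
    obtain ⟨z, hz1, hz2, hz3⟩ := pen q hwu
    have hz_le : ft L γ z ≤ ft L γ u := by
      apply hsupp
      rw [SimpleGraph.Walk.support_cons]
      exact List.mem_cons_of_mem _ hz3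
    have hdir2 : par L γ u = z := by
      rcases hz1 with ⟨h1, h2, h3⟩ | ⟨_, _, h3⟩
      · exfalso
        have := ft_par_lt h1 h2
        rw [h3] at this
        omega
      · exact h3
    rw [hdir1] at hdir2
    rw [← hdir2, Sym2.eq_swap] at hz2
    exact he hz2

lemma reach : ∀ n, ∀ x, x ∈ S L γ → ft L γ x ≤ n → (T L γ).Reachable x (γ 0) := by
  intro n
  induction n with
  | zero =>
    intro x hx h0
    have h1 := (ft_spec hx).2
    rw [Nat.le_zero] at h0
    rw [h0] at h1
    exact h1 ▸ SimpleGraph.Reachable.refl _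
  | succ n ih =>
    intro x hx h0
    by_cases hx0 : x = γ 0
    · exact hx0 ▸ SimpleGraph.Reachable.refl _
    · have hadj : (T L γ).Adj x (par L γ x) := Or.inl ⟨hx, hx0, rfl⟩
      refine hadj.reachable.trans (ih (par L γ x) par_mem ?_)
      have := ft_par_lt hx hx0
      omega



lemma charge (hstep : ∀ s < L, γ s ≠ γ (s + 1)) (hclosed : γ L = γ 0) :
    ((S L γ).filter fun u => u ≠ γ 0 ∧ ch L γ u = ∅).card ≤
      ((Finset.range (L - 1)).filter fun s => γ s = γ (s + 2)).card +
        (E L γ \ Te L γ).card := by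
  classical
  set F0 := (S L γ).filter fun u => u ≠ γ 0 ∧ ch L γ u = ∅ with hF0
  set B := (Finset.range (L - 1)).filter fun s => γ s = γ (s + 2) with hB
  have key : ∀ u ∈ F0, γ (ft L γ u) = u ∧ 1 ≤ ft L γ u ∧ ft L γ u < L ∧
      γ (ft L γ u + 1) ≠ u ∧ ft L γ (γ (ft L γ u + 1)) ≤ ft L γ u := by
    intro u hu
    rw [hF0, Finset.mem_filter] at hu
    obtain ⟨huS, hune, hch⟩ := hu
    have h1 := (ft_spec huS).2
    have h2 := ft_pos huS hune
    have h3 := ft_lt hclosed huS hune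
    have h4 : γ (ft L γ u + 1) ≠ u := by
      have := hstep (ft L γ u) h3
      rw [h1] at this
      exact fun hcon => this hcon.symm
    refine ⟨h1, h2, h3, h4, ?_⟩
    by_contra hcon
    push_neg at hcon
    set z := γ (ft L γ u + 1) with hz
    have hzS : z ∈ S L γ := mem_S.2 ⟨ft L γ u + 1, by omega, rfl⟩
    have hz1 : ft L γ z ≤ ft L γ u + 1 := ft_le (by omega) rfl
    have hz2 : ft L γ z = ft L γ u + 1 := by omega
    have hzne : z ≠ γ 0 := by
      intro hcon2
      rw [hcon2, ft_root] at hz2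
      omega
    have hpar : par L γ z = u := by
      rw [par, hz2, Nat.add_sub_cancel, h1]
    have : z ∈ ch L γ u := by
      rw [ch, Finset.mem_filter]
      exact ⟨hzS, hzne, hpar⟩
    rw [hch] at this
    exact absurd this (Finset.notMem_empty z)
  apply le_trans (Finset.card_le_card_of_injOn
    (fun u => if γ (ft L γ u - 1) = γ (ft L γ u + 1) then (Sum.inl (ft L γ u - 1) : ℕ ⊕ Sym2 V)
      else Sum.inr s(u, γ (ft L γ u + 1)))
    (t := B.image Sum.inl ∪ (E L γ \ Te L γ).image Sum.inr) ?_ ?_)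
  · exact le_trans (Finset.card_union_le _ _)
      (add_le_add (Finset.card_image_le) (Finset.card_image_le))
  · -- maps into target
    intro u hu
    obtain ⟨k1, k2, k3, k4, k5⟩ := key u hu
    rw [hF0, Finset.mem_coe, Finset.mem_filter] at hu
    obtain ⟨huS, hune, hch⟩ := hu
    dsimp only
    split_ifs with hb
    · apply Finset.mem_union_left
      rw [Finset.mem_image]
      refine ⟨ft L γ u - 1, ?_, rfl⟩
      rw [hB, Finset.mem_filter]
      constructor
      · rw [Finset.mem_range]; omega
      · have h5 : ft L γ u - 1 + 2 = ft L γ u + 1 := by omega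
        rw [h5]; exact hb
    · apply Finset.mem_union_right
      rw [Finset.mem_image]
      refine ⟨s(u, γ (ft L γ u + 1)), ?_, rfl⟩
      rw [Finset.mem_sdiff]
      constructor
      · rw [E, Finset.mem_image]
        exact ⟨ft L γ u, Finset.mem_range.2 k3, by rw [k1]⟩
      · intro hTe
        rw [Te, Finset.mem_image] at hTe
        obtain ⟨w, hw, hwe⟩ := hTe
        rw [Finset.mem_filter] at hw
        rw [Sym2.eq_iff] at hwe
        rcases hwe with ⟨e1, e2⟩ | ⟨e1, e2⟩
        · have : w ∈ ch L γ u := by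
            rw [ch, Finset.mem_filter]
            exact ⟨hw.1, hw.2, e1⟩
          rw [hch] at this
          exact absurd this (Finset.notMem_empty w)
        · apply hb
          rw [← e1, e2, par]
  · -- injective
    intro u hu u' hu' heq
    rw [Finset.mem_coe] at hu hu'
    obtain ⟨k1, k2, k3, k4, k5⟩ := key u hu
    obtain ⟨k1', k2', k3', k4', k5'⟩ := key u' hu'
    dsimp only at heq
    by_cases hb : γ (ft L γ u - 1) = γ (ft L γ u + 1) <;>
      by_cases hb' : γ (ft L γ u' - 1) = γ (ft L γ u' + 1)
    · rw [if_pos hb, if_pos hb', Sum.inl.injEq] at heq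
      have : ft L γ u = ft L γ u' := by omega
      rw [← k1, ← k1', this]
    · rw [if_pos hb, if_neg hb'] at heq
      exact absurd heq (by simp)
    · rw [if_neg hb, if_pos hb'] at heq
      exact absurd heq (by simp)
    · rw [if_neg hb, if_neg hb', Sum.inr.injEq, Sym2.eq_iff] at heq
      rcases heq with ⟨e1, _⟩ | ⟨e1, e2⟩
      · exact e1
      · have q1 : ft L γ u ≤ ft L γ u' := by rw [e1]; exact k5'
        have q2 : ft L γ u' ≤ ft L γ u := by rw [e2] at k5; exact k5
        have : ft L γ u = ft L γ u' := by omega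
        rw [← k1, ← k1', this]



lemma sum_ch_card : ∑ u ∈ S L γ, (ch L γ u).card = ((S L γ).filter (· ≠ γ 0)).card := by
  rw [Finset.card_eq_sum_card_fiberwise (f := par L γ) (t := S L γ)
    (fun w _ => par_mem)]
  apply Finset.sum_congr rfl
  intro u _
  rw [ch, Finset.filter_filter]

lemma main_ineq (m : ℕ) (hstep : ∀ s < L, γ s ≠ γ (s + 1)) (hclosed : γ L = γ 0)
    (hback : ((Finset.range (L - 1)).filter fun s => γ s = γ (s + 2)).card ≤ 2 * m) :
    ∑ u ∈ ((S L γ).filter fun u => 2 < Nat.card {w | (T L γ).Adj u w}),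
      (Nat.card {w | (T L γ).Adj u w} - 2) ≤
      (E L γ).card - ((S L γ).card - 1) + 2 * m := by
  classical
  have h1 : (S L γ).filter (fun u => 2 < Nat.card {w | (T L γ).Adj u w}) ⊆
      (S L γ).filter (fun u => 2 ≤ (ch L γ u).card) := by
    intro u hu
    rw [Finset.mem_filter] at hu ⊢
    refine ⟨hu.1, ?_⟩
    have h2 := hu.2
    rw [deg_eq hu.1] at h2
    split_ifs at h2 <;> omega
  have h2 : ∑ u ∈ (S L γ).filter (fun u => 2 < Nat.card {w | (T L γ).Adj u w}),
      (Nat.card {w | (T L γ).Adj u w} - 2) ≤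
      ∑ u ∈ (S L γ).filter (fun u => 2 ≤ (ch L γ u).card), ((ch L γ u).card - 1) := by
    calc ∑ u ∈ (S L γ).filter (fun u => 2 < Nat.card {w | (T L γ).Adj u w}),
        (Nat.card {w | (T L γ).Adj u w} - 2) ≤
        ∑ u ∈ (S L γ).filter (fun u => 2 < Nat.card {w | (T L γ).Adj u w}),
        ((ch L γ u).card - 1) := by
          apply Finset.sum_le_sum
          intro u hu
          rw [Finset.mem_filter] at hu
          rw [deg_eq hu.1]
          split_ifs <;> omega
      _ ≤ _ := Finset.sum_le_sum_of_subset h1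
  have h3 : ∑ u ∈ (S L γ).filter (fun u => 2 ≤ (ch L γ u).card), ((ch L γ u).card - 1) +
      ((S L γ).filter (fun u => 1 ≤ (ch L γ u).card)).card ≤
      ∑ u ∈ S L γ, (ch L γ u).card := by
    have e1 : ∑ u ∈ (S L γ).filter (fun u => 1 ≤ (ch L γ u).card), (ch L γ u).card ≤
        ∑ u ∈ S L γ, (ch L γ u).card :=
      Finset.sum_le_sum_of_subset (Finset.filter_subset _ _)
    have e2 : ∑ u ∈ (S L γ).filter (fun u => 1 ≤ (ch L γ u).card), (ch L γ u).card =
        ∑ u ∈ (S L γ).filter (fun u => 1 ≤ (ch L γ u).card), (((ch L γ u).card - 1) + 1) := by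
      apply Finset.sum_congr rfl
      intro u hu
      have := (Finset.mem_filter.1 hu).2
      omega
    rw [e2, Finset.sum_add_distrib, Finset.sum_const, smul_eq_mul, mul_one] at e1
    have e3 : ∑ u ∈ (S L γ).filter (fun u => 2 ≤ (ch L γ u).card), ((ch L γ u).card - 1) ≤
        ∑ u ∈ (S L γ).filter (fun u => 1 ≤ (ch L γ u).card), ((ch L γ u).card - 1) := by
      apply Finset.sum_le_sum_of_subset
      intro u hu
      rw [Finset.mem_filter] at hu ⊢
      exact ⟨hu.1, by omega⟩
    omega
  have h4 := sum_ch_card (L := L) (γ := γ)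
  have h5 : ((S L γ).filter (· ≠ γ 0)).card + 1 = (S L γ).card := by
    rw [Finset.filter_ne', Finset.card_erase_add_one root_mem]
  have h6 : (S L γ).card ≤ ((S L γ).filter (fun u => 1 ≤ (ch L γ u).card)).card +
      (((S L γ).filter (fun u => u ≠ γ 0 ∧ ch L γ u = ∅)).card + 1) := by
    have hsub : S L γ ⊆ ((S L γ).filter (fun u => 1 ≤ (ch L γ u).card)) ∪
        (((S L γ).filter (fun u => u ≠ γ 0 ∧ ch L γ u = ∅)) ∪ {γ 0}) := by
      intro u hu
      rw [Finset.mem_union, Finset.mem_union, Finset.mem_filter, Finset.mem_filter,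
        Finset.mem_singleton]
      by_cases hc1 : 1 ≤ (ch L γ u).card
      · exact Or.inl ⟨hu, hc1⟩
      · by_cases hroot : u = γ 0
        · exact Or.inr (Or.inr hroot)
        · refine Or.inr (Or.inl ⟨hu, hroot, ?_⟩)
          rw [← Finset.card_eq_zero]
          omega
    calc (S L γ).card ≤ _ := Finset.card_le_card hsub
      _ ≤ _ := by
          refine le_trans (Finset.card_union_le _ _) ?_
          refine add_le_add le_rfl (le_trans (Finset.card_union_le _ _) ?_)
          simp
  have h7 := charge hstep hclosed
  have h8 : (E L γ \ Te L γ).card = (E L γ).card - (Te L γ).card :=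
    Finset.card_sdiff_of_subset (Te_subset_E hclosed)
  have h9 := Te_card (L := L) (γ := γ)
  have h10 : (Te L γ).card ≤ (E L γ).card := Finset.card_le_card (Te_subset_E hclosed)
  omega



lemma edge_count : Nat.card (T L γ).edgeSet = (S L γ).card - 1 := by
  rw [edgeSet_eq, Nat.card_coe_set_eq, Set.ncard_coe_finset]
  have := Te_card (L := L) (γ := γ)
  omega

end STDOB

/-- A closed walk with at most `2m` backtracks, visiting `v` vertices and `e` distinct
edges, admits a spanning tree of its graph whose degree sequence satisfies
`Σ_{u : d_u > 2} (d_u − 2) ≤ e − (v − 1) + 2m`. -/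
theorem spanning_tree_degree_overshoot_bound
    {V : Type*} [Fintype V] [DecidableEq V]
    (L m : ℕ) (hL : 1 ≤ L) (γ : ℕ → V)
    (hstep : ∀ s < L, γ s ≠ γ (s + 1))
    (hclosed : γ L = γ 0)
    (hback : ((Finset.range (L - 1)).filter fun s => γ s = γ (s + 2)).card ≤ 2 * m) :
    ∃ T : SimpleGraph V,
      T.IsAcyclic ∧
      (∀ x y, T.Adj x y → s(x, y) ∈ (Finset.range L).image fun s => s(γ s, γ (s + 1))) ∧
      (∀ x ∈ (Finset.range (L + 1)).image γ, ∀ y ∈ (Finset.range (L + 1)).image γ,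
        T.Reachable x y) ∧
      Nat.card T.edgeSet = ((Finset.range (L + 1)).image γ).card - 1 ∧
      ∑ u ∈ (((Finset.range (L + 1)).image γ).filter
          fun u => 2 < Nat.card {w | T.Adj u w}),
        (Nat.card {w | T.Adj u w} - 2) ≤
        ((Finset.range L).image fun s => s(γ s, γ (s + 1))).card -
            (((Finset.range (L + 1)).image γ).card - 1) + 2 * m := by
  refine ⟨STDOB.T L γ, STDOB.T_acyclic, fun x y h => STDOB.adj_mem_E hclosed h,
    fun x hx y hy => (STDOB.reach (STDOB.ft L γ x) x hx le_rfl).trans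
      (STDOB.reach (STDOB.ft L γ y) y hy le_rfl).symm,
    STDOB.edge_count, STDOB.main_ineq m hstep hclosed hback⟩
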